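/- Let d ∈ {2,3}, ω ∈ C²(ℝ^d \ {0}, ℝ), and g ∈ C¹(ℝ^d \ {0}, ℝ). Suppose that for all v, v*, v', v*' ∈ ℝ^d \ {0} with v + v* = v' + v*' and ω(v) + ω(v*) = ω(v') + ω(v*'), one has g(v) + g(v*) = g(v') + g(v*'). Then for all v, v* ∈ ℝ^d \ {0}: (∇g(v) − ∇g(v*)) × (∇ω(v) − ∇ω(v*)) = 0 (cross product in ℝ³; for d = 2 the cross product of a = (a₁,a₂) and b = (b₁,b₂) means a₁b₂ − a₂b₁). -/

import Mathlib

open Filter Topology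

theorem stmt_7 (d : ℕ) (hd : d = 2 ∨ d = 3) (ω g : (Fin d → ℝ) → ℝ)
    (hω : ContDiffOn ℝ 2 ω {v : Fin d → ℝ | v ≠ 0})
    (hg : ContDiffOn ℝ 1 g {v : Fin d → ℝ | v ≠ 0})
    (hcoll : ∀ v w v' w' : Fin d → ℝ, v ≠ 0 → w ≠ 0 → v' ≠ 0 → w' ≠ 0 →
      v + w = v' + w' → ω v + ω w = ω v' + ω w' → g v + g w = g v' + g w') :
    -- the cross product (∇g(v) − ∇g(v*)) × (∇ω(v) − ∇ω(v*)) vanishes, expressed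
    -- through the vanishing of all its 2×2 minors (valid both for d = 2 and d = 3)
    ∀ v w : Fin d → ℝ, v ≠ 0 → w ≠ 0 → ∀ i j : Fin d,
      (fderiv ℝ g v (Pi.single i 1) - fderiv ℝ g w (Pi.single i 1)) *
          (fderiv ℝ ω v (Pi.single j 1) - fderiv ℝ ω w (Pi.single j 1)) -
        (fderiv ℝ g v (Pi.single j 1) - fderiv ℝ g w (Pi.single j 1)) *
          (fderiv ℝ ω v (Pi.single i 1) - fderiv ℝ ω w (Pi.single i 1)) = 0 := by
  intro v w hv hw i j
  have hUopen : IsOpen {v : Fin d → ℝ | v ≠ 0} := isOpen_ne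
  set A : (Fin d → ℝ) →L[ℝ] ℝ := fderiv ℝ g v - fderiv ℝ g w with hAdef
  set B : (Fin d → ℝ) →L[ℝ] ℝ := fderiv ℝ ω v - fderiv ℝ ω w with hBdef
  suffices h : ∀ x y : Fin d → ℝ, A x * B y = A y * B x by
    have := h (Pi.single i 1) (Pi.single j 1)
    simp only [hAdef, hBdef, ContinuousLinearMap.sub_apply] at this
    rw [sub_eq_zero]
    exact this
  intro x y
  by_cases hex : ∃ n, B n ≠ 0
  swap
  · push_neg at hex
    simp [hex x, hex y]
  obtain ⟨n, hn⟩ := hex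
  -- strict derivatives of g and ω at v and w
  have hωv : HasStrictFDerivAt ω (fderiv ℝ ω v) v :=
    (hω.contDiffAt (hUopen.mem_nhds hv)).hasStrictFDerivAt (by norm_num)
  have hωw : HasStrictFDerivAt ω (fderiv ℝ ω w) w :=
    (hω.contDiffAt (hUopen.mem_nhds hw)).hasStrictFDerivAt (by norm_num)
  have hgv : HasStrictFDerivAt g (fderiv ℝ g v) v :=
    (hg.contDiffAt (hUopen.mem_nhds hv)).hasStrictFDerivAt (by norm_num)
  have hgw : HasStrictFDerivAt g (fderiv ℝ g w) w :=
    (hg.contDiffAt (hUopen.mem_nhds hw)).hasStrictFDerivAt (by norm_num)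
  -- the key claim: ker B ⊆ ker A
  have key : ∀ u : Fin d → ℝ, B u = 0 → A u = 0 := by
    intro u hu
    -- the constraint function
    set φ : (Fin d → ℝ) → ℝ := fun x => ω (v + x) + ω (w - x) with hφdef
    have h1 : HasStrictFDerivAt (fun x : Fin d → ℝ => ω (v + x)) (fderiv ℝ ω v) 0 := by
      have hin : HasStrictFDerivAt (fun x : Fin d → ℝ => v + x)
          (ContinuousLinearMap.id ℝ (Fin d → ℝ)) 0 := (hasStrictFDerivAt_id 0).const_add v
      have hωv' : HasStrictFDerivAt ω (fderiv ℝ ω v) (v + 0) := by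
        rwa [add_zero]
      have := hωv'.comp 0 hin
      simpa using this
    have h2 : HasStrictFDerivAt (fun x : Fin d → ℝ => ω (w - x)) (-(fderiv ℝ ω w)) 0 := by
      have hin : HasStrictFDerivAt (fun x : Fin d → ℝ => w - x)
          (-(ContinuousLinearMap.id ℝ (Fin d → ℝ))) 0 := (hasStrictFDerivAt_id 0).const_sub w
      have hωw' : HasStrictFDerivAt ω (fderiv ℝ ω w) (w - 0) := by
        rwa [sub_zero]
      have := hωw'.comp 0 hin
      have heq : (fderiv ℝ ω w).comp (-(ContinuousLinearMap.id ℝ (Fin d → ℝ)))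
          = -(fderiv ℝ ω w) := by ext z; simp
      rw [heq] at this
      exact this
    have hφ : HasStrictFDerivAt φ B 0 := by
      have := h1.add h2
      have heq : fderiv ℝ ω v + -(fderiv ℝ ω w) = B := by rw [hBdef]; abel
      rwa [heq] at this
    have hsurj : B.range = ⊤ := by
      rw [LinearMap.range_eq_top]
      intro r
      refine ⟨(r / B n) • n, ?_⟩
      simp only [map_smul, smul_eq_mul]
      field_simp
      rfl
    -- the implicit function
    set c : B.ker → (Fin d → ℝ) := hφ.implicitFunction φ B hsurj (φ 0) with hcdef
    have hc0 : c 0 = 0 := hφ.implicitFunction_apply_image hsurj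
    have hcd : HasStrictFDerivAt c (B.ker).subtypeL 0 :=
      hφ.to_implicitFunction hsurj
    set u₀ : B.ker := ⟨u, by simpa [LinearMap.mem_ker] using hu⟩ with hu₀def
    -- the curve γ t = c (t • u₀)
    have hs : HasDerivAt (fun t : ℝ => t • u₀) u₀ 0 := by
      simpa using (hasDerivAt_id (0 : ℝ)).smul_const u₀
    set γ : ℝ → (Fin d → ℝ) := fun t => c (t • u₀) with hγdef
    have hγ0 : γ 0 = 0 := by simp [hγdef, hc0]
    have hγd : HasDerivAt γ u 0 := by
      have hcd' : HasFDerivAt c (B.ker).subtypeL ((0 : ℝ) • u₀) := by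
        rw [zero_smul]; exact hcd.hasFDerivAt
      have := hcd'.comp_hasDerivAt 0 hs
      simpa [hγdef, Function.comp_def] using this
    -- derivative of F t = g (v + γ t) + g (w - γ t) at 0
    have hFv : HasDerivAt (fun t => g (v + γ t)) (fderiv ℝ g v u) 0 := by
      have hin : HasDerivAt (fun t => v + γ t) u 0 := hγd.const_add v
      have hgv' : HasFDerivAt g (fderiv ℝ g v) (v + γ 0) := by
        rw [hγ0, add_zero]; exact hgv.hasFDerivAt
      have := hgv'.comp_hasDerivAt 0 hin
      simpa [Function.comp_def] using this
    have hFw : HasDerivAt (fun t => g (w - γ t)) (-(fderiv ℝ g w u)) 0 := by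
      have hin : HasDerivAt (fun t => w - γ t) (-u) 0 := hγd.const_sub w
      have hgw' : HasFDerivAt g (fderiv ℝ g w) (w - γ 0) := by
        rw [hγ0, sub_zero]; exact hgw.hasFDerivAt
      have := hgw'.comp_hasDerivAt 0 hin
      simpa [Function.comp_def] using this
    have hFd : HasDerivAt (fun t => g (v + γ t) + g (w - γ t))
        (fderiv ℝ g v u - fderiv ℝ g w u) 0 := by
      have := hFv.add hFw
      simpa [sub_eq_add_neg, Pi.add_def] using this
    -- F is eventually constant near 0
    have hsm : Filter.Tendsto (fun t : ℝ => t • u₀) (𝓝 0) (𝓝 0) := by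
      have hcontc : Continuous (fun t : ℝ => t • u₀) := continuous_id.smul continuous_const
      have := hcontc.tendsto (0 : ℝ)
      simpa using this
    have hγcont : Filter.Tendsto γ (𝓝 0) (𝓝 0) := by
      have h2 : Filter.Tendsto c (𝓝 0) (𝓝 0) := by
        have := hcd.continuousAt
        rwa [ContinuousAt, hc0] at this
      exact h2.comp hsm
    have evφ : ∀ᶠ t : ℝ in 𝓝 0, φ (γ t) = φ 0 := by
      have hmap := hφ.map_implicitFunction_eq hsurj
      have htend : Filter.Tendsto (fun t : ℝ => ((φ 0 : ℝ), t • u₀)) (𝓝 0)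
          (𝓝 (φ 0, 0)) := by
        rw [nhds_prod_eq]; exact tendsto_const_nhds.prodMk hsm
      filter_upwards [htend.eventually hmap] with t ht using ht
    have evv : ∀ᶠ t : ℝ in 𝓝 0, v + γ t ≠ 0 := by
      have htend : Filter.Tendsto (fun t => v + γ t) (𝓝 0) (𝓝 v) := by
        simpa using tendsto_const_nhds.add hγcont
      exact htend.eventually (hUopen.eventually_mem hv)
    have evw : ∀ᶠ t : ℝ in 𝓝 0, w - γ t ≠ 0 := by
      have htend : Filter.Tendsto (fun t => w - γ t) (𝓝 0) (𝓝 w) := by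
        simpa using tendsto_const_nhds.sub hγcont
      exact htend.eventually (hUopen.eventually_mem hw)
    have evF : ∀ᶠ t : ℝ in 𝓝 0,
        (fun t => g (v + γ t) + g (w - γ t)) t = (fun _ : ℝ => g v + g w) t := by
      filter_upwards [evφ, evv, evw] with t h1 h2 h3
      have hmom : v + w = (v + γ t) + (w - γ t) := by abel
      have hen : ω v + ω w = ω (v + γ t) + ω (w - γ t) := by
        have := h1
        simp only [hφdef, add_zero, sub_zero] at this
        exact this.symm
      exact (hcoll v w _ _ hv hw h2 h3 hmom hen).symm
    have hFd0 : HasDerivAt (fun t => g (v + γ t) + g (w - γ t)) 0 0 :=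
      (hasDerivAt_const (0 : ℝ) (g v + g w)).congr_of_eventuallyEq evF
    have := hFd.unique hFd0
    rw [hAdef]
    simpa [ContinuousLinearMap.sub_apply] using this
  -- conclude linear dependence from ker B ⊆ ker A
  have hz : ∀ z, A z = B z / B n * A n := by
    intro z
    have h0 : B (z - (B z / B n) • n) = 0 := by
      simp only [map_sub, map_smul, smul_eq_mul]
      field_simp
      simp
    have := key _ h0
    simp only [map_sub, map_smul, smul_eq_mul, sub_eq_zero] at this
    exact this
  rw [hz x, hz y]
  ring
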